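/- arXiv:1501.02846 — 4 statements merged into one kernel-verified Lean document; each statement's English description precedes it below -/
import Mathlib

section
/- Let X be a δ-hyperbolic metric space, x₀ ∈ X, and let g₁, …, g_k be isometries of X such that d(x₀, g_i x₀) ≥ 2(g_j^{ε} x₀ · g_l^{η} x₀)_{x₀} + 18δ + 1 for all 1 ≤ i, j, l ≤ k and all signs ε, η ∈ {±1}, except in the cases j = l with ε = η. Then the orbit map from the group Γ = ⟨g₁, …, g_k⟩ (with the word metric on the generating set {g₁^{±1}, …, g_k^{±1}}) to X, given by g ↦ g x₀, is a quasi-isometric embedding. -/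
/-- The Gromov product `(y ⬝ z)_x = (d(x,y) + d(x,z) - d(y,z))/2`. -/
noncomputable def gromovProd {X : Type*} [MetricSpace X] (x y z : X) : ℝ :=
  (dist x y + dist x z - dist y z) / 2

/-- The word length of `g` with respect to a generating set `S`: the least length of a
word in the elements of `S` representing `g`. -/
noncomputable def wordLength {G : Type*} [Group G] (S : Set G) (g : G) : ℕ :=
  sInf {n | ∃ w : List G, (∀ x ∈ w, x ∈ S) ∧ w.length = n ∧ w.prod = g}

section Aux

variable {X : Type*} [MetricSpace X]

lemma gp_nonneg (x y z : X) : 0 ≤ gromovProd x y z := by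
  have h := dist_triangle y x z
  rw [dist_comm y x] at h
  unfold gromovProd; linarith

lemma gp_symm (x y z : X) : gromovProd x y z = gromovProd x z y := by
  unfold gromovProd; rw [dist_comm y z]; ring

lemma gp_add (x y z : X) : gromovProd x y z + gromovProd y x z = dist x y := by
  unfold gromovProd; rw [dist_comm y x, dist_comm y z]; ring

lemma gp_dist (x y z : X) : dist y z = dist x y + dist x z - 2 * gromovProd x y z := by
  unfold gromovProd; ring

lemma gp_iso (f : X ≃ᵢ X) (x y z : X) : gromovProd (f x) (f y) (f z) = gromovProd x y z := by
  unfold gromovProd; rw [f.dist_eq, f.dist_eq, f.dist_eq]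

lemma gp_self (x z : X) : gromovProd x x z = 0 := by
  unfold gromovProd; rw [dist_self]; ring

/-- The chain lemma: a chain of points with small adjacent Gromov products and
long steps makes linear progress. -/
lemma chain_lemma (δ c : ℝ) (hδ0 : 0 ≤ δ) (hc : 0 ≤ c)
    (hδ : ∀ x y z w : X, gromovProd w x z ≥ min (gromovProd w x y) (gromovProd w y z) - δ)
    (n : ℕ) (y : ℕ → X)
    (hg : ∀ m, m + 2 ≤ n → gromovProd (y (m+1)) (y m) (y (m+2)) ≤ c)
    (hd : ∀ m, m + 1 ≤ n → 2*c + 18*δ + 1 ≤ dist (y m) (y (m+1))) :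
    (n : ℝ) ≤ dist (y 0) (y n) := by
  have key : ∀ m, m + 1 ≤ n → gromovProd (y m) (y 0) (y (m+1)) ≤ c + δ ∧
      ((m:ℝ)+1) * (2*c + 18*δ + 1) - 2 * (m:ℝ) * (c + δ) ≤ dist (y 0) (y (m+1)) := by
    intro m
    induction m with
    | zero =>
      intro h
      refine ⟨by rw [gp_self]; linarith, ?_⟩
      have := hd 0 h
      push_cast
      linarith
    | succ m ih =>
      intro h
      have h1 : m + 1 ≤ n := by omega
      obtain ⟨ih1, ih2⟩ := ih h1
      have h4 := hδ (y m) (y 0) (y (m+2)) (y (m+1))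
      have hgm := hg m h
      have hfirst : c + δ < gromovProd (y (m+1)) (y m) (y 0) := by
        have e1 := gp_add (y (m+1)) (y m) (y 0)
        have e2 := gp_symm (y m) (y (m+1)) (y 0)
        have e3 := hd m h1
        rw [dist_comm] at e3
        rw [e2, gp_symm (y m) (y 0) (y (m+1))] at e1
        linarith
      have hsecond : gromovProd (y (m+1)) (y 0) (y (m+2)) ≤ c + δ := by
        rcases min_le_iff.mp (le_refl (min (gromovProd (y (m+1)) (y m) (y 0))
            (gromovProd (y (m+1)) (y 0) (y (m+2))))) with hm1 | hm2
        · -- min ≤ first; need to case on which is min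
          rcases le_total (gromovProd (y (m+1)) (y m) (y 0))
              (gromovProd (y (m+1)) (y 0) (y (m+2))) with hle | hle
          · rw [min_eq_left hle] at h4
            linarith
          · rw [min_eq_right hle] at h4
            linarith
        · rcases le_total (gromovProd (y (m+1)) (y m) (y 0))
              (gromovProd (y (m+1)) (y 0) (y (m+2))) with hle | hle
          · rw [min_eq_left hle] at h4
            linarith
          · rw [min_eq_right hle] at h4
            linarith
      refine ⟨hsecond, ?_⟩
      have e5 := gp_dist (y (m+1)) (y 0) (y (m+2))
      rw [dist_comm (y (m+1)) (y 0)] at e5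
      have e6 := hd (m+1) h
      push_cast at e6 ⊢
      push_cast at ih2
      linarith
  cases n with
  | zero => simpa using dist_nonneg
  | succ m =>
    obtain ⟨_, h2⟩ := key m (le_refl _)
    have hm : (0:ℝ) ≤ (m:ℝ) := Nat.cast_nonneg m
    push_cast
    nlinarith

lemma prod_dist_le (x₀ : X) (K : ℝ) :
    ∀ w : List (X ≃ᵢ X), (∀ s ∈ w, dist x₀ (s x₀) ≤ K) →
      dist x₀ (w.prod x₀) ≤ (w.length : ℝ) * K
  | [], _ => by simp
  | s :: t, h => by
    have ht := prod_dist_le x₀ K t (fun u hu => h u (List.mem_cons_of_mem _ hu))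
    have hs := h s List.mem_cons_self
    have hap : (s :: t).prod x₀ = s (t.prod x₀) := by
      rw [List.prod_cons, IsometryEquiv.mul_apply]
    calc dist x₀ ((s :: t).prod x₀) ≤ dist x₀ (s x₀) + dist (s x₀) ((s :: t).prod x₀) :=
          dist_triangle _ _ _
      _ = dist x₀ (s x₀) + dist x₀ (t.prod x₀) := by rw [hap, s.dist_eq]
      _ ≤ K + (t.length : ℝ) * K := add_le_add hs ht
      _ = ((s :: t).length : ℝ) * K := by
          rw [List.length_cons]; push_cast; ring

lemma exists_word {G : Type*} [Group G] {S : Set G} (hS : ∀ s ∈ S, s⁻¹ ∈ S) {x : G}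
    (hx : x ∈ Subgroup.closure S) : ∃ w : List G, (∀ s ∈ w, s ∈ S) ∧ w.prod = x := by
  induction hx using Subgroup.closure_induction with
  | mem x hx => exact ⟨[x], by simpa using hx, by simp⟩
  | one => exact ⟨[], by simp, by simp⟩
  | mul x y hx hy ihx ihy =>
    obtain ⟨w1, hw1, hp1⟩ := ihx
    obtain ⟨w2, hw2, hp2⟩ := ihy
    exact ⟨w1 ++ w2, by
      intro s hs
      rcases List.mem_append.mp hs with h | h
      exacts [hw1 s h, hw2 s h], by rw [List.prod_append, hp1, hp2]⟩
  | inv x hx ihx =>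
    obtain ⟨w, hw, hp⟩ := ihx
    refine ⟨(w.map fun a => a⁻¹).reverse, ?_, ?_⟩
    · intro s hs
      rw [List.mem_reverse, List.mem_map] at hs
      obtain ⟨u, hu, rfl⟩ := hs
      exact hS u (hw u hu)
    · rw [← List.prod_inv_reverse, hp]

end Aux

theorem orbit_map_qi_embedding {X : Type*} [MetricSpace X] (δ : ℝ)
    (hδ : ∀ x y z w : X, gromovProd w x z ≥ min (gromovProd w x y) (gromovProd w y z) - δ)
    (x₀ : X) (k : ℕ) (g : Fin k → (X ≃ᵢ X))
    (hyp : ∀ (i j l : Fin k) (ε η : Bool), (j ≠ l ∨ ε ≠ η) →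
      dist x₀ (g i x₀) ≥
        2 * gromovProd x₀ ((if ε then g j else (g j)⁻¹) x₀)
            ((if η then g l else (g l)⁻¹) x₀) + 18 * δ + 1) :
    let S : Set (X ≃ᵢ X) := {s | ∃ i, s = g i ∨ s = (g i)⁻¹}
    ∃ K C : ℝ, 1 ≤ K ∧ 0 ≤ C ∧
      ∀ a ∈ Subgroup.closure S, ∀ b ∈ Subgroup.closure S,
        (1 / K) * (wordLength S (a⁻¹ * b) : ℝ) - C ≤ dist (a x₀) (b x₀) ∧
          dist (a x₀) (b x₀) ≤ K * (wordLength S (a⁻¹ * b) : ℝ) + C := by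
  intro S
  have hδ0 : 0 ≤ δ := by
    have h := hδ x₀ x₀ x₀ x₀
    have h0 : gromovProd x₀ x₀ x₀ = 0 := gp_self x₀ x₀
    rw [h0, min_self] at h
    linarith
  have hSsym : ∀ s ∈ S, s⁻¹ ∈ S := by
    rintro s ⟨i, rfl | rfl⟩
    · exact ⟨i, Or.inr rfl⟩
    · exact ⟨i, Or.inl (inv_inv (g i))⟩
  have hdist_inv : ∀ e : X ≃ᵢ X, dist x₀ (e⁻¹ x₀) = dist x₀ (e x₀) := by
    intro e
    conv_lhs => rw [← e.dist_eq x₀ (e⁻¹ x₀)]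
    rw [IsometryEquiv.apply_inv_self, dist_comm]
  rcases Nat.eq_zero_or_pos k with hk | hk
  · -- k = 0 : the group is trivial
    subst hk
    refine ⟨1, 0, le_refl 1, le_refl 0, ?_⟩
    intro a ha b hb
    have hS : S = ∅ := by
      ext s
      simp only [S, Set.mem_setOf_eq, Set.mem_empty_iff_false, iff_false]
      rintro ⟨i, -⟩
      exact i.elim0
    rw [hS, Subgroup.closure_empty, Subgroup.mem_bot] at ha hb
    subst ha; subst hb
    have hwl : wordLength S (1⁻¹ * 1 : X ≃ᵢ X) = 0 := by
      apply Nat.eq_zero_of_le_zero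
      apply Nat.sInf_le
      exact ⟨[], by simp, by simp, by simp⟩
    rw [hwl]
    simp
  -- main case : k ≥ 1
  have i0 : Fin k := ⟨0, hk⟩
  set T : Finset (Fin k × Fin k × Bool × Bool) :=
    Finset.univ.filter (fun p => p.1 ≠ p.2.1 ∨ p.2.2.1 ≠ p.2.2.2) with hT
  set F : Fin k × Fin k × Bool × Bool → ℝ := fun p =>
    gromovProd x₀ ((if p.2.2.1 then g p.1 else (g p.1)⁻¹) x₀)
      ((if p.2.2.2 then g p.2.1 else (g p.2.1)⁻¹) x₀) with hF
  have hTne : T.Nonempty := ⟨(i0, i0, true, false), by simp [hT]⟩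
  set c : ℝ := T.sup' hTne F with hcdef
  have hc0 : 0 ≤ c := le_trans (gp_nonneg _ _ _) (Finset.le_sup' F hTne.choose_spec)
  have hgen : ∀ i, 2*c + 18*δ + 1 ≤ dist x₀ (g i x₀) := by
    intro i
    have hle : c ≤ (dist x₀ (g i x₀) - 18*δ - 1)/2 := by
      apply Finset.sup'_le
      intro p hp
      have hp' : p.1 ≠ p.2.1 ∨ p.2.2.1 ≠ p.2.2.2 := by
        simpa [hT] using hp
      have := hyp i p.1 p.2.1 p.2.2.1 p.2.2.2 hp'
      simp only [hF]
      linarith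
    linarith
  have hgenS : ∀ s ∈ S, 2*c + 18*δ + 1 ≤ dist x₀ (s x₀) := by
    rintro s ⟨i, rfl | rfl⟩
    · exact hgen i
    · rw [hdist_inv]; exact hgen i
  have hgp : ∀ u ∈ S, ∀ v ∈ S, v ≠ u⁻¹ → gromovProd x₀ (u⁻¹ x₀) (v x₀) ≤ c := by
    rintro u ⟨j, hu⟩ v ⟨l, hv⟩ hne
    obtain ⟨ε, hε⟩ : ∃ ε : Bool, u⁻¹ = (if ε then g j else (g j)⁻¹) := by
      rcases hu with rfl | rfl
      exacts [⟨false, by simp⟩, ⟨true, by simp⟩]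
    obtain ⟨η, hη⟩ : ∃ η : Bool, v = (if η then g l else (g l)⁻¹) := by
      rcases hv with rfl | rfl
      exacts [⟨true, rfl⟩, ⟨false, rfl⟩]
    have hmem : (j, l, ε, η) ∈ T := by
      simp only [hT, Finset.mem_filter, Finset.mem_univ, true_and]
      by_contra hcon
      push_neg at hcon
      obtain ⟨rfl, rfl⟩ := hcon
      exact hne (hη.trans hε.symm)
    have hle := Finset.le_sup' F hmem
    rw [hε, hη]
    exact hle
  -- choice of constants
  have hKne : (Finset.univ : Finset (Fin k)).Nonempty := ⟨i0, Finset.mem_univ i0⟩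
  set K : ℝ := max 1 (Finset.univ.sup' hKne (fun i => dist x₀ (g i x₀))) with hKdef
  have hK1 : 1 ≤ K := le_max_left _ _
  have hKS : ∀ s ∈ S, dist x₀ (s x₀) ≤ K := by
    rintro s ⟨i, rfl | rfl⟩
    · exact le_trans (Finset.le_sup' (fun i => dist x₀ (g i x₀)) (Finset.mem_univ i))
        (le_max_right _ _)
    · rw [hdist_inv]
      exact le_trans (Finset.le_sup' (fun i => dist x₀ (g i x₀)) (Finset.mem_univ i))
        (le_max_right _ _)
  refine ⟨K, 0, hK1, le_refl 0, ?_⟩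
  intro a ha b hb
  set p : X ≃ᵢ X := a⁻¹ * b with hpdef
  have hp : p ∈ Subgroup.closure S := mul_mem (inv_mem ha) hb
  obtain ⟨w₀, hw₀S, hw₀p⟩ := exists_word hSsym hp
  set WSet : Set ℕ := {n | ∃ w : List (X ≃ᵢ X), (∀ x ∈ w, x ∈ S) ∧ w.length = n ∧ w.prod = p}
    with hWSet
  have hWne : WSet.Nonempty := ⟨w₀.length, w₀, hw₀S, rfl, hw₀p⟩
  have hwl_eq : wordLength S p = sInf WSet := rfl
  set n : ℕ := wordLength S p with hndef
  have hnmem : n ∈ WSet := hwl_eq ▸ Nat.sInf_mem hWne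
  obtain ⟨w, hwS, hwlen, hwprod⟩ := hnmem
  have hmin : ∀ m ∈ WSet, n ≤ m := fun m hm => hwl_eq ▸ Nat.sInf_le hm
  have hdd : dist (a x₀) (b x₀) = dist x₀ (p x₀) := by
    have h1 : a⁻¹ (a x₀) = x₀ := IsometryEquiv.inv_apply_self a x₀
    have h2 : a⁻¹ (b x₀) = p x₀ := (IsometryEquiv.mul_apply a⁻¹ b x₀).symm
    rw [← (a⁻¹ : X ≃ᵢ X).dist_eq (a x₀) (b x₀), h1, h2]
  constructor
  · -- lower bound
    -- reducedness of the minimal word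
    have hred : ∀ m (h2 : m + 2 ≤ w.length), w[m+1]'(by omega) ≠ (w[m]'(by omega))⁻¹ := by
      intro m h2 hcancel
      set w' : List (X ≃ᵢ X) := w.take m ++ w.drop (m+2) with hw'
      have h1 : w.drop m = w[m]'(by omega) :: w[m+1]'(by omega) :: w.drop (m+2) := by
        rw [List.drop_eq_getElem_cons (by omega), List.drop_eq_getElem_cons (by omega)]
      have h2' : w.prod = (w.take m).prod *
          ((w[m]'(by omega)) * ((w[m+1]'(by omega)) * (w.drop (m+2)).prod)) := by
        conv_lhs => rw [← List.take_append_drop m w, h1]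
        rw [List.prod_append, List.prod_cons, List.prod_cons]
      have hprod' : w'.prod = p := by
        rw [hw', List.prod_append, ← hwprod, h2', hcancel, mul_inv_cancel_left]
      have hlen' : w'.length = w.length - 2 := by
        rw [hw', List.length_append, List.length_take, List.length_drop]
        omega
      have hmem' : w'.length ∈ WSet := by
        refine ⟨w', ?_, rfl, hprod'⟩
        intro s hs
        rcases List.mem_append.mp hs with h | h
        · exact hwS s (List.mem_of_mem_take h)
        · exact hwS s (List.mem_of_mem_drop h)
      have := hmin _ hmem'
      rw [hlen'] at this
      omega
    set y : ℕ → X := fun m => ((w.take m).prod) x₀ with hy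
    have hy0 : y 0 = x₀ := by simp [hy]
    have hyn : y w.length = p x₀ := by
      simp only [hy]
      rw [List.take_of_length_le (le_refl _), hwprod]
    have hystep : ∀ m (hm1 : m + 1 ≤ w.length), y (m+1) = ((w.take m).prod * w[m]'(by omega)) x₀ := by
      intro m hm
      simp only [hy]
      rw [List.prod_take_succ _ _ (by omega)]
    have hd : ∀ m, m + 1 ≤ w.length → 2*c + 18*δ + 1 ≤ dist (y m) (y (m+1)) := by
      intro m hm
      have := hystep m hm
      rw [this]
      have : ((w.take m).prod * w[m]'(by omega)) x₀ =
          (w.take m).prod ((w[m]'(by omega)) x₀) := IsometryEquiv.mul_apply _ _ _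
      rw [this]
      simp only [hy]
      rw [IsometryEquiv.dist_eq]
      exact hgenS _ (hwS _ (List.getElem_mem _))
    have hg : ∀ m, m + 2 ≤ w.length → gromovProd (y (m+1)) (y m) (y (m+2)) ≤ c := by
      intro m hm
      have hu : (w[m]'(by omega)) ∈ S := hwS _ (List.getElem_mem _)
      have hv : (w[m+1]'(by omega)) ∈ S := hwS _ (List.getElem_mem _)
      set P : X ≃ᵢ X := (w.take m).prod with hP
      set u : X ≃ᵢ X := w[m]'(by omega) with hudef
      set v : X ≃ᵢ X := w[m+1]'(by omega) with hvdef
      have e1 : y (m+1) = (P * u) x₀ := hystep m (by omega)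
      have e2 : y (m+2) = (P * u * v) x₀ := by
        have := hystep (m+1) hm
        rw [this]
        have htake : (w.take (m+1)).prod = P * u := by
          rw [List.prod_take_succ _ _ (by omega)]
        rw [htake]
      have e3 : y m = (P * u) (u⁻¹ x₀) := by
        simp only [hy, ← hP]
        rw [IsometryEquiv.mul_apply, IsometryEquiv.apply_inv_self]
      have e4 : (P * u * v) x₀ = (P * u) (v x₀) := IsometryEquiv.mul_apply _ _ _
      rw [e1, e2, e3, e4, gp_iso]
      exact hgp u hu v hv (hred m hm)
    have hchain := chain_lemma δ c hδ0 hc0 hδ w.length y hg hd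
    rw [hy0, hyn] at hchain
    rw [hdd]
    have hcast : (n:ℝ) = (w.length:ℝ) := by rw [hwlen]
    rw [← hcast] at hchain
    have hn0 : (0:ℝ) ≤ (n:ℝ) := Nat.cast_nonneg n
    have hKpos : (0:ℝ) < K := lt_of_lt_of_le one_pos hK1
    have hinv : (1/K) * (n:ℝ) ≤ (n:ℝ) := by
      rw [div_mul_eq_mul_div, one_mul, div_le_iff₀ hKpos]
      nlinarith
    linarith
  · -- upper bound
    rw [hdd, ← hwprod]
    have := prod_dist_le x₀ K w (fun s hs => hKS s (hwS s hs))
    rw [hwlen] at this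
    linarith
end

section
/- Let X be a δ-hyperbolic metric space, x₀ ∈ X, and let g₁, …, g_k be isometries of X satisfying d(x₀, g_i x₀) ≥ 2(g_j^{ε} x₀ · g_l^{η} x₀)_{x₀} + 18δ + 1 for all indices and signs except j = l with ε = η. Then for every nonempty reduced word g = s₁s₂⋯sₙ in the letters {g₁^{±1}, …, g_k^{±1}} (reduced meaning s_{i+1} ≠ s_i^{−1}), one has d(x₀, g x₀) ≥ n. In particular g ≠ 1, so ⟨g₁, …, g_k⟩ is free of rank k. -/
namespace ReducedWordsAux

variable {X : Type*} [MetricSpace X]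

lemma gp_nonneg (x y z : X) : 0 ≤ gromovProd x y z := by
  have h := dist_triangle y x z
  rw [dist_comm y x] at h
  unfold gromovProd
  linarith

lemma gp_isom (e : X ≃ᵢ X) (x y z : X) :
    gromovProd (e x) (e y) (e z) = gromovProd x y z := by
  unfold gromovProd
  rw [e.dist_eq, e.dist_eq, e.dist_eq]

lemma apply_inv_self' (e : X ≃ᵢ X) (x : X) : e (e⁻¹ x) = x :=
  e.apply_symm_apply x

noncomputable def ltr {k : ℕ} (g : Fin k → (X ≃ᵢ X)) (p : Fin k × Bool) : X ≃ᵢ X :=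
  if p.2 then g p.1 else (g p.1)⁻¹

lemma ltr_inv {k : ℕ} (g : Fin k → (X ≃ᵢ X)) (p : Fin k × Bool) :
    (ltr g p)⁻¹ = ltr g (p.1, !p.2) := by
  rcases p with ⟨j, ε⟩
  cases ε <;> simp [ltr]

lemma dist_ltr {k : ℕ} (g : Fin k → (X ≃ᵢ X)) (p : Fin k × Bool) (x : X) :
    dist x (ltr g p x) = dist x (g p.1 x) := by
  rcases p with ⟨j, ε⟩
  cases ε
  · show dist x ((g j)⁻¹ x) = dist x (g j x)
    calc dist x ((g j)⁻¹ x) = dist (g j x) (g j ((g j)⁻¹ x)) := ((g j).dist_eq _ _).symm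
    _ = dist (g j x) x := by rw [apply_inv_self']
    _ = dist x (g j x) := dist_comm _ _
  · rfl

noncomputable def Wp {k : ℕ} (g : Fin k → (X ≃ᵢ X)) (n : ℕ) (w : Fin n → Fin k × Bool) :
    X ≃ᵢ X :=
  (List.ofFn fun i => ltr g (w i)).prod

lemma Wp_succ {k n : ℕ} (g : Fin k → (X ≃ᵢ X)) (w : Fin (n + 1) → Fin k × Bool) :
    Wp g (n + 1) w = Wp g n (w ∘ Fin.castSucc) * ltr g (w (Fin.last n)) := by
  unfold Wp
  rw [List.ofFn_succ', List.prod_concat]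
  rfl

/-- The purely metric induction step. -/
lemma step (δ : ℝ) (hδ0 : 0 ≤ δ) (x₀ c a b : X) (L' L'' P : ℝ)
    (h4 : gromovProd a c b ≥ min (gromovProd a c x₀) (gromovProd a x₀ b) - δ)
    (hca : dist c a = L') (hab : dist a b = L'')
    (hP : gromovProd a c b = P)
    (hL' : L' ≥ 2 * P + 18 * δ + 1) (hL'' : L'' ≥ 2 * P + 18 * δ + 1)
    (hinv : 2 * gromovProd c x₀ a ≤ L' - (16 * δ + 1)) :
    2 * gromovProd a x₀ b ≤ L'' - (16 * δ + 1) ∧ dist x₀ b ≥ dist x₀ a + 16 * δ + 1 := by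
  have idAC : gromovProd a c x₀ + gromovProd c x₀ a = dist c a := by
    unfold gromovProd
    rw [dist_comm a c, dist_comm a x₀]
    ring
  have idB : 2 * gromovProd a x₀ b = dist x₀ a + dist a b - dist x₀ b := by
    unfold gromovProd
    rw [dist_comm a x₀]
    ring
  rcases le_total (gromovProd a c x₀) (gromovProd a x₀ b) with h | h
  · exfalso
    rw [min_eq_left h] at h4
    linarith
  · rw [min_eq_right h] at h4
    have hG' : gromovProd a x₀ b ≤ P + δ := by linarith
    constructor
    · linarith
    · linarith

lemma aux {k : ℕ} (δ : ℝ)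
    (hδ : ∀ x y z w : X, gromovProd w x z ≥ min (gromovProd w x y) (gromovProd w y z) - δ)
    (x₀ : X) (g : Fin k → (X ≃ᵢ X))
    (hyp' : ∀ (i : Fin k) (p q : Fin k × Bool), p.1 ≠ q.1 ∨ p.2 ≠ q.2 →
      dist x₀ (g i x₀) ≥
        2 * gromovProd x₀ (ltr g p x₀) (ltr g q x₀) + 18 * δ + 1) :
    ∀ (m : ℕ) (w : Fin (m + 1) → Fin k × Bool),
      (∀ i : Fin (m + 1), ∀ h : (i : ℕ) + 1 < m + 1,
        ¬((w ⟨i + 1, h⟩).1 = (w i).1 ∧ (w ⟨i + 1, h⟩).2 ≠ (w i).2)) →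
      dist x₀ (Wp g (m + 1) w x₀) ≥ (m + 1 : ℝ) ∧
      2 * gromovProd (Wp g m (w ∘ Fin.castSucc) x₀) x₀ (Wp g (m + 1) w x₀)
        ≤ dist x₀ (g (w (Fin.last m)).1 x₀) - (16 * δ + 1) := by
  have hδ0 : 0 ≤ δ := by
    have h := hδ x₀ x₀ x₀ x₀
    rw [min_self] at h
    linarith
  intro m
  induction m with
  | zero =>
    intro w _
    have h1 : Wp g 1 w = ltr g (w (Fin.last 0)) := by
      rw [Wp_succ g w]
      have h0 : Wp g 0 (w ∘ Fin.castSucc) = 1 := by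
        unfold Wp
        rw [List.ofFn_zero, List.prod_nil]
      rw [h0, one_mul]
    have hL : dist x₀ (g (w (Fin.last 0)).1 x₀) ≥
        2 * gromovProd x₀ (ltr g ((w (Fin.last 0)).1, true) x₀)
          (ltr g ((w (Fin.last 0)).1, false) x₀) + 18 * δ + 1 :=
      hyp' (w (Fin.last 0)).1 ((w (Fin.last 0)).1, true) ((w (Fin.last 0)).1, false)
        (Or.inr (by simp))
    have hP := gp_nonneg x₀ (ltr g ((w (Fin.last 0)).1, true) x₀)
      (ltr g ((w (Fin.last 0)).1, false) x₀)
    have hd : dist x₀ (Wp g 1 w x₀) = dist x₀ (g (w (Fin.last 0)).1 x₀) := by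
      rw [h1, dist_ltr]
    have h0' : Wp g 0 (w ∘ Fin.castSucc) x₀ = x₀ := by
      have h0 : Wp g 0 (w ∘ Fin.castSucc) = 1 := by
        unfold Wp
        rw [List.ofFn_zero, List.prod_nil]
      rw [h0]
      rfl
    constructor
    · rw [hd]
      push_cast at hL hP ⊢
      linarith
    · rw [h0']
      have hz : gromovProd x₀ x₀ (Wp g 1 w x₀) = 0 := by
        unfold gromovProd
        simp
      rw [hz]
      linarith
  | succ m ih =>
    intro w hred
    -- the prefix word
    have hred' : ∀ i : Fin (m + 1), ∀ h : (i : ℕ) + 1 < m + 1,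
        ¬(((w ∘ Fin.castSucc) ⟨i + 1, h⟩).1 = ((w ∘ Fin.castSucc) i).1 ∧
          ((w ∘ Fin.castSucc) ⟨i + 1, h⟩).2 ≠ ((w ∘ Fin.castSucc) i).2) := by
      intro i h
      exact hred (Fin.castSucc i) (by simp only [Fin.coe_castSucc]; omega)
    obtain ⟨ih1, ih2⟩ := ih (w ∘ Fin.castSucc) hred'
    -- abbreviations (as plain expressions)
    -- q = (w ∘ castSucc) (last m), r = w (last (m+1))
    have hnr : ¬((w (Fin.last (m + 1))).1 = (w (Fin.castSucc (Fin.last m))).1 ∧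
        (w (Fin.last (m + 1))).2 ≠ (w (Fin.castSucc (Fin.last m))).2) :=
      hred (Fin.castSucc (Fin.last m)) (by simp only [Fin.coe_castSucc, Fin.val_last]; omega)
    have hvalid : ((w (Fin.castSucc (Fin.last m))).1, !(w (Fin.castSucc (Fin.last m))).2).1
          ≠ (w (Fin.last (m + 1))).1 ∨
        ((w (Fin.castSucc (Fin.last m))).1, !(w (Fin.castSucc (Fin.last m))).2).2
          ≠ (w (Fin.last (m + 1))).2 := by
      by_cases h1 : (w (Fin.last (m + 1))).1 = (w (Fin.castSucc (Fin.last m))).1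
      · right
        have h2 : (w (Fin.last (m + 1))).2 = (w (Fin.castSucc (Fin.last m))).2 := by
          by_contra h3
          exact hnr ⟨h1, h3⟩
        show (!(w (Fin.castSucc (Fin.last m))).2) ≠ (w (Fin.last (m + 1))).2
        rw [h2]
        cases (w (Fin.castSucc (Fin.last m))).2 <;> simp
      · left
        exact fun hh => h1 hh.symm
    -- splitting of products
    have hc : Wp g (m + 1) (w ∘ Fin.castSucc)
          ((ltr g ((w ∘ Fin.castSucc) (Fin.last m)))⁻¹ x₀)
        = Wp g m ((w ∘ Fin.castSucc) ∘ Fin.castSucc) x₀ := by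
      rw [Wp_succ g (w ∘ Fin.castSucc)]
      show Wp g m ((w ∘ Fin.castSucc) ∘ Fin.castSucc)
          (ltr g ((w ∘ Fin.castSucc) (Fin.last m))
            ((ltr g ((w ∘ Fin.castSucc) (Fin.last m)))⁻¹ x₀)) = _
      rw [apply_inv_self']
    have hbE : Wp g (m + 1 + 1) w x₀
        = Wp g (m + 1) (w ∘ Fin.castSucc) (ltr g (w (Fin.last (m + 1))) x₀) := by
      rw [Wp_succ g w]
      rfl
    -- distances
    have hdca : dist (Wp g m ((w ∘ Fin.castSucc) ∘ Fin.castSucc) x₀)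
        (Wp g (m + 1) (w ∘ Fin.castSucc) x₀)
        = dist x₀ (g ((w ∘ Fin.castSucc) (Fin.last m)).1 x₀) := by
      rw [← hc, (Wp g (m + 1) (w ∘ Fin.castSucc)).dist_eq, dist_comm,
        ltr_inv, dist_ltr]
    have hdab : dist (Wp g (m + 1) (w ∘ Fin.castSucc) x₀) (Wp g (m + 1 + 1) w x₀)
        = dist x₀ (g (w (Fin.last (m + 1))).1 x₀) := by
      rw [hbE, (Wp g (m + 1) (w ∘ Fin.castSucc)).dist_eq, dist_ltr]
    -- the local Gromov product
    have hPeq : gromovProd (Wp g (m + 1) (w ∘ Fin.castSucc) x₀)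
        (Wp g m ((w ∘ Fin.castSucc) ∘ Fin.castSucc) x₀) (Wp g (m + 1 + 1) w x₀)
        = gromovProd x₀
            (ltr g (((w ∘ Fin.castSucc) (Fin.last m)).1,
              !((w ∘ Fin.castSucc) (Fin.last m)).2) x₀)
            (ltr g (w (Fin.last (m + 1))) x₀) := by
      rw [← hc, hbE, gp_isom, ltr_inv]
    have hL' : dist x₀ (g ((w ∘ Fin.castSucc) (Fin.last m)).1 x₀) ≥
        2 * gromovProd x₀
            (ltr g (((w ∘ Fin.castSucc) (Fin.last m)).1,
              !((w ∘ Fin.castSucc) (Fin.last m)).2) x₀)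
            (ltr g (w (Fin.last (m + 1))) x₀) + 18 * δ + 1 :=
      hyp' ((w ∘ Fin.castSucc) (Fin.last m)).1 _ _ hvalid
    have hL'' : dist x₀ (g (w (Fin.last (m + 1))).1 x₀) ≥
        2 * gromovProd x₀
            (ltr g (((w ∘ Fin.castSucc) (Fin.last m)).1,
              !((w ∘ Fin.castSucc) (Fin.last m)).2) x₀)
            (ltr g (w (Fin.last (m + 1))) x₀) + 18 * δ + 1 :=
      hyp' (w (Fin.last (m + 1))).1 _ _ hvalid
    have hstep := step δ hδ0 x₀
      (Wp g m ((w ∘ Fin.castSucc) ∘ Fin.castSucc) x₀)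
      (Wp g (m + 1) (w ∘ Fin.castSucc) x₀)
      (Wp g (m + 1 + 1) w x₀)
      (dist x₀ (g ((w ∘ Fin.castSucc) (Fin.last m)).1 x₀))
      (dist x₀ (g (w (Fin.last (m + 1))).1 x₀))
      (gromovProd x₀
        (ltr g (((w ∘ Fin.castSucc) (Fin.last m)).1,
          !((w ∘ Fin.castSucc) (Fin.last m)).2) x₀)
        (ltr g (w (Fin.last (m + 1))) x₀))
      (hδ _ x₀ _ _) hdca hdab hPeq hL' hL'' ih2
    constructor
    · have := hstep.2
      push_cast at ih1 ⊢
      linarith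
    · exact hstep.1

end ReducedWordsAux

open ReducedWordsAux in
theorem reduced_words_move_basepoint {X : Type*} [MetricSpace X] (δ : ℝ)
    (hδ : ∀ x y z w : X, gromovProd w x z ≥ min (gromovProd w x y) (gromovProd w y z) - δ)
    (x₀ : X) (k : ℕ) (g : Fin k → (X ≃ᵢ X))
    (hyp : ∀ (i j l : Fin k) (ε η : Bool), (j ≠ l ∨ ε ≠ η) →
      dist x₀ (g i x₀) ≥
        2 * gromovProd x₀ ((if ε then g j else (g j)⁻¹) x₀)
            ((if η then g l else (g l)⁻¹) x₀) + 18 * δ + 1) :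
    ∀ (n : ℕ) (w : Fin n → Fin k × Bool),
      -- the word is reduced: no letter is followed by its inverse symbol
      (∀ i : Fin n, ∀ h : (i : ℕ) + 1 < n,
        ¬((w ⟨i + 1, h⟩).1 = (w i).1 ∧ (w ⟨i + 1, h⟩).2 ≠ (w i).2)) →
      dist x₀ (((List.ofFn fun i =>
          if (w i).2 then g (w i).1 else (g (w i).1)⁻¹).prod) x₀) ≥ n ∧
        (1 ≤ n → (List.ofFn fun i =>
          if (w i).2 then g (w i).1 else (g (w i).1)⁻¹).prod ≠ 1) := by
  have hyp' : ∀ (i : Fin k) (p q : Fin k × Bool), p.1 ≠ q.1 ∨ p.2 ≠ q.2 →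
      dist x₀ (g i x₀) ≥
        2 * gromovProd x₀ (ltr g p x₀) (ltr g q x₀) + 18 * δ + 1 := by
    intro i p q h
    exact hyp i p.1 q.1 p.2 q.2 h
  intro n w hred
  show dist x₀ (Wp g n w x₀) ≥ n ∧ (1 ≤ n → Wp g n w ≠ 1)
  rcases n with _ | m
  · constructor
    · have h0 : Wp g 0 w = 1 := by
        unfold Wp
        rw [List.ofFn_zero, List.prod_nil]
      rw [h0]
      simp
    · intro h
      omega
  · obtain ⟨h1, _⟩ := aux δ hδ x₀ g hyp' m w hred
    constructor
    · exact_mod_cast h1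
    · intro _ heq
      rw [heq] at h1
      have : dist x₀ ((1 : X ≃ᵢ X) x₀) = 0 := by
        show dist x₀ x₀ = 0
        simp
      rw [this] at h1
      have hm : (0 : ℝ) ≤ (m : ℝ) := Nat.cast_nonneg m
      linarith
end

section
/- Let G be a countable group acting by isometries on a δ-hyperbolic space X with basepoint x₀, and let wₙ and uₙ be independent G-valued random variables with distributions μₙ and μ̌ₙ respectively. Suppose there is a function f with f(r) → 0 as r → ∞ such that μₙ(S) ≤ f(r) for every shadow S = S_{x₀}(g x₀, R) with distance parameter d(x₀, g x₀) − R ≥ r. Then for any function l : ℕ → ℕ with l(n) → ∞, one has P[(wₙ x₀ · uₙ⁻¹ x₀)_{x₀} ≤ l(n)] → 1 as n → ∞. -/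
open MeasureTheory ProbabilityTheory Filter

/-- The shadow `S_p(q, R) = { y : (q ⬝ y)_p ≥ d(p,q) - R }`. -/
def shadow {X : Type*} [MetricSpace X] (p q : X) (R : ℝ) : Set X :=
  {y | gromovProd p q y ≥ dist p q - R}

theorem gromov_product_of_independent_walks_small
    {G : Type*} [Group G] [Countable G] [MeasurableSpace G] [DiscreteMeasurableSpace G]
    {X : Type*} [MetricSpace X] (δ : ℝ)
    (hδ : ∀ x y z w : X, gromovProd w x z ≥ min (gromovProd w x y) (gromovProd w y z) - δ)
    [MulAction G X] (hisom : ∀ g : G, Isometry (fun x : X => g • x)) (x₀ : X)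
    {Ω : Type*} [MeasurableSpace Ω] (P : Measure Ω) [IsProbabilityMeasure P]
    (w u : ℕ → Ω → G) (hwmeas : ∀ n, Measurable (w n)) (humeas : ∀ n, Measurable (u n))
    (hindep : ∀ n, IndepFun (w n) (u n) P)
    (ν : ℕ → Measure G) (hν : ∀ n, IsProbabilityMeasure (ν n))
    (hlaww : ∀ n, Measure.map (w n) P = ν n)
    -- `u n` has law `μ̌ₙ`, the reflection of `νₙ`
    (hlawu : ∀ n, Measure.map (u n) P = Measure.map (fun x : G => x⁻¹) (ν n))
    -- decay of shadows
    (f : ℝ → ℝ) (hf : Tendsto f atTop (nhds 0))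
    (hshadow : ∀ (n : ℕ) (r R : ℝ) (g : G), dist x₀ (g • x₀) - R ≥ r →
      ν n {h : G | h • x₀ ∈ shadow x₀ (g • x₀) R} ≤ ENNReal.ofReal (f r))
    (l : ℕ → ℕ) (hl : Tendsto l atTop atTop) :
    Tendsto (fun n =>
        P {ω | gromovProd x₀ (w n ω • x₀) ((u n ω)⁻¹ • x₀) ≤ (l n : ℝ)})
      atTop (nhds 1) := by
  have minv : Measurable (fun x : G => x⁻¹) := Measurable.of_discrete
  have huinv : ∀ n, Measurable (fun ω => (u n ω)⁻¹) := fun n => minv.comp (humeas n)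
  have hlawuinv : ∀ n, Measure.map (fun ω => (u n ω)⁻¹) P = ν n := by
    intro n
    have : (fun ω => (u n ω)⁻¹) = (fun x : G => x⁻¹) ∘ u n := rfl
    rw [this, ← Measure.map_map minv (humeas n), hlawu n,
      Measure.map_map minv minv]
    simp
  have hpair : ∀ n, Measurable (fun ω => (w n ω, (u n ω)⁻¹)) := fun n =>
    (hwmeas n).prodMk (huinv n)
  have hjoint : ∀ n, Measure.map (fun ω => (w n ω, (u n ω)⁻¹)) P = (ν n).prod (ν n) := by
    intro n
    have hind : IndepFun (w n) (fun ω => (u n ω)⁻¹) P :=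
      (hindep n).comp measurable_id minv
    rw [(indepFun_iff_map_prod_eq_prod_map_map (hwmeas n).aemeasurable
      (huinv n).aemeasurable).mp hind, hlaww n, hlawuinv n]
  -- the key bound
  have key : ∀ n, P {ω | (l n : ℝ) < gromovProd x₀ (w n ω • x₀) ((u n ω)⁻¹ • x₀)}
      ≤ ENNReal.ofReal (f (l n)) := by
    intro n
    haveI := hν n
    set s : Set (G × G) := {p : G × G | (l n : ℝ) < gromovProd x₀ (p.1 • x₀) (p.2 • x₀)}
    have hset : {ω | (l n : ℝ) < gromovProd x₀ (w n ω • x₀) ((u n ω)⁻¹ • x₀)}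
        = (fun ω => (w n ω, (u n ω)⁻¹)) ⁻¹' s := rfl
    have hsm : MeasurableSet s := MeasurableSet.of_discrete
    rw [hset, ← Measure.map_apply (hpair n) hsm, hjoint n, Measure.prod_apply hsm]
    have hb : ∀ g : G, ν n (Prod.mk g ⁻¹' s) ≤ ENNReal.ofReal (f (l n)) := by
      intro g
      refine le_trans (measure_mono ?_) (hshadow n (l n) (dist x₀ (g • x₀) - (l n : ℝ)) g
        (by ring_nf; exact le_refl _))
      intro h hh
      simp only [Set.mem_preimage, Set.mem_setOf_eq, s] at hh
      simp only [Set.mem_setOf_eq, shadow, gromovProd] at *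
      linarith
    calc ∫⁻ g, ν n (Prod.mk g ⁻¹' s) ∂ν n ≤ ∫⁻ _, ENNReal.ofReal (f (l n)) ∂ν n :=
          lintegral_mono hb
      _ = ENNReal.ofReal (f (l n)) := by simp
  -- limit
  have hf0 : Tendsto (fun n => ENNReal.ofReal (f (l n))) atTop (nhds 0) := by
    have : Tendsto (fun n => f (l n)) atTop (nhds 0) :=
      hf.comp (tendsto_natCast_atTop_atTop.comp hl)
    simpa using ENNReal.tendsto_ofReal this
  have hPgt : Tendsto (fun n => P {ω | (l n : ℝ) <
      gromovProd x₀ (w n ω • x₀) ((u n ω)⁻¹ • x₀)}) atTop (nhds 0) :=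
    tendsto_of_tendsto_of_tendsto_of_le_of_le tendsto_const_nhds hf0
      (fun n => zero_le) key
  have hcompl : ∀ n, P {ω | gromovProd x₀ (w n ω • x₀) ((u n ω)⁻¹ • x₀) ≤ (l n : ℝ)}
      = 1 - P {ω | (l n : ℝ) < gromovProd x₀ (w n ω • x₀) ((u n ω)⁻¹ • x₀)} := by
    intro n
    have hms : MeasurableSet {ω | (l n : ℝ) <
        gromovProd x₀ (w n ω • x₀) ((u n ω)⁻¹ • x₀)} :=
      (hpair n) (MeasurableSet.of_discrete
        (s := {p : G × G | (l n : ℝ) < gromovProd x₀ (p.1 • x₀) (p.2 • x₀)}))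
    have : {ω | gromovProd x₀ (w n ω • x₀) ((u n ω)⁻¹ • x₀) ≤ (l n : ℝ)}
        = {ω | (l n : ℝ) < gromovProd x₀ (w n ω • x₀) ((u n ω)⁻¹ • x₀)}ᶜ := by
      ext ω; simp [not_lt]
    rw [this, measure_compl hms (measure_ne_top P _), measure_univ]
  simp only [hcompl]
  have := ENNReal.Tendsto.sub (tendsto_const_nhds (x := (1 : ENNReal))) hPgt
    (Or.inl ENNReal.one_ne_top)
  simpa using this
end

section
/- Let G be a countable group acting by isometries on a δ-hyperbolic space X with basepoint x₀, and suppose wₙ and uₘ are independent G-valued random variables with laws μₘ and μ_{n−m}. Writing wₙ = w_m u_m (where m = ⌊n/2⌋), suppose: decay of shadows holds with function f; and P[d(x₀, w_m x₀) ≥ l(n) + εn] → 1 for some ε > 0. Then P[(wₙ x₀ · w_m x₀)_{x₀} ≥ l(n)] → 1 as n → ∞. -/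
open MeasureTheory ProbabilityTheory Filter

/-- Key deterministic identity. -/
lemma gromov_sum {G : Type*} [Group G] {X : Type*} [MetricSpace X] [MulAction G X]
    (hisom : ∀ g : G, Isometry (fun x : X => g • x)) (x₀ : X) (g h : G) :
    gromovProd x₀ ((g * h) • x₀) (g • x₀) + gromovProd x₀ (g⁻¹ • x₀) (h • x₀)
      = dist x₀ (g • x₀) := by
  have e1 : dist x₀ ((g * h) • x₀) = dist (g⁻¹ • x₀) (h • x₀) := by
    have := (hisom g).dist_eq (g⁻¹ • x₀) (h • x₀)
    simpa [smul_smul] using this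
  have e2 : dist ((g * h) • x₀) (g • x₀) = dist (h • x₀) x₀ := by
    have := (hisom g).dist_eq (h • x₀) x₀
    simpa [smul_smul] using this
  have e3 : dist x₀ (g⁻¹ • x₀) = dist x₀ (g • x₀) := by
    have := (hisom g).dist_eq (g⁻¹ • x₀) x₀
    simp only [smul_inv_smul] at this
    rw [dist_comm x₀ (g⁻¹ • x₀), ← this]
  simp only [gromovProd, e1, e2, e3]
  rw [dist_comm (h • x₀) x₀]
  ring

theorem gromov_product_with_midpoint_large
    {G : Type*} [Group G] [Countable G] [MeasurableSpace G] [DiscreteMeasurableSpace G]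
    {X : Type*} [MetricSpace X] (δ : ℝ)
    (hδ : ∀ x y z w : X, gromovProd w x z ≥ min (gromovProd w x y) (gromovProd w y z) - δ)
    [MulAction G X] (hisom : ∀ g : G, Isometry (fun x : X => g • x)) (x₀ : X)
    {Ω : Type*} [MeasurableSpace Ω] (P : Measure Ω) [IsProbabilityMeasure P]
    (wm um : ℕ → Ω → G)
    (hwmeas : ∀ n, Measurable (wm n)) (humeas : ∀ n, Measurable (um n))
    (hindep : ∀ n, IndepFun (wm n) (um n) P)
    (μfam : ℕ → Measure G) (hμfam : ∀ j, IsProbabilityMeasure (μfam j))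
    -- `wm n` is the walk at time `m = ⌊n/2⌋` and `um n` the independent increment with
    -- law `μ_{n-m}`
    (hlawwm : ∀ n, Measure.map (wm n) P = μfam (n / 2))
    (hlawum : ∀ n, Measure.map (um n) P = μfam (n - n / 2))
    -- decay of shadows: both `μ_j` and `μ̌_j` give small measure to shadows with large
    -- distance parameter
    (f : ℝ → ℝ) (hf : Tendsto f atTop (nhds 0))
    (hshadow : ∀ (j : ℕ) (r R : ℝ) (g : G), dist x₀ (g • x₀) - R ≥ r →
      μfam j {h : G | h • x₀ ∈ shadow x₀ (g • x₀) R} ≤ ENNReal.ofReal (f r) ∧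
      μfam j {h : G | h⁻¹ • x₀ ∈ shadow x₀ (g • x₀) R} ≤ ENNReal.ofReal (f r))
    (l : ℕ → ℕ) (ε : ℝ) (hε : 0 < ε)
    (hprog : Tendsto (fun n =>
        P {ω | dist x₀ (wm n ω • x₀) ≥ (l n : ℝ) + ε * n}) atTop (nhds 1)) :
    Tendsto (fun n =>
        P {ω | gromovProd x₀ ((wm n ω * um n ω) • x₀) (wm n ω • x₀) ≥ (l n : ℝ)})
      atTop (nhds 1) := by
  classical
  -- good-walk event, target event, bad event
  set A : ℕ → Set Ω := fun n => {ω | dist x₀ (wm n ω • x₀) ≥ (l n : ℝ) + ε * n} with hA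
  set E : ℕ → Set Ω := fun n =>
    {ω | gromovProd x₀ ((wm n ω * um n ω) • x₀) (wm n ω • x₀) ≥ (l n : ℝ)} with hE
  -- for each g, the bad set of increments
  set T : ℕ → G → Set G := fun n g =>
    if (l n : ℝ) + ε * n ≤ dist x₀ (g • x₀) then
      {h : G | h • x₀ ∈ shadow x₀ (g⁻¹ • x₀) (dist x₀ (g⁻¹ • x₀) - ε * n)}
    else ∅ with hT
  -- bound on μfam (n - n/2) (T n g)
  have hTbound : ∀ n g, μfam (n - n / 2) (T n g) ≤ ENNReal.ofReal (f (ε * n)) := by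
    intro n g
    by_cases hg : (l n : ℝ) + ε * n ≤ dist x₀ (g • x₀)
    · rw [hT]; simp only [if_pos hg]
      exact (hshadow (n - n / 2) (ε * n) (dist x₀ (g⁻¹ • x₀) - ε * n) g⁻¹ (by ring_nf; rfl)).1
    · rw [hT]; simp only [if_neg hg, measure_empty]; positivity
  -- inclusion A ⊆ E ∪ (bad union)
  have hincl : ∀ n, A n ⊆ E n ∪ ⋃ g : G, (wm n ⁻¹' {g} ∩ um n ⁻¹' (T n g)) := by
    intro n ω hω
    by_cases hωE : ω ∈ E n
    · exact Or.inl hωE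
    · refine Or.inr (Set.mem_iUnion.2 ⟨wm n ω, Set.mem_singleton _, ?_⟩)
      have hωA : (l n : ℝ) + ε * n ≤ dist x₀ (wm n ω • x₀) := hω
      have hlt : gromovProd x₀ ((wm n ω * um n ω) • x₀) (wm n ω • x₀) < (l n : ℝ) :=
        lt_of_not_ge hωE
      have key := gromov_sum hisom x₀ (wm n ω) (um n ω)
      have : gromovProd x₀ ((wm n ω)⁻¹ • x₀) (um n ω • x₀)
          ≥ dist x₀ ((wm n ω)⁻¹ • x₀) - (dist x₀ ((wm n ω)⁻¹ • x₀) - ε * n) := by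
        have e3 : dist x₀ ((wm n ω)⁻¹ • x₀) = dist x₀ (wm n ω • x₀) := by
          have := (hisom (wm n ω)).dist_eq ((wm n ω)⁻¹ • x₀) x₀
          simp only [smul_inv_smul] at this
          rw [dist_comm x₀ ((wm n ω)⁻¹ • x₀), ← this]
        have : gromovProd x₀ ((wm n ω)⁻¹ • x₀) (um n ω • x₀) > ε * n := by
          nlinarith
        linarith
      show um n ω ∈ T n (wm n ω)
      rw [hT]; simp only [if_pos hωA]
      exact this
  -- probability bound on the bad union
  have hbad : ∀ n, P (⋃ g : G, (wm n ⁻¹' {g} ∩ um n ⁻¹' (T n g)))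
      ≤ ENNReal.ofReal (f (ε * n)) := by
    intro n
    calc P (⋃ g : G, (wm n ⁻¹' {g} ∩ um n ⁻¹' (T n g)))
        ≤ ∑' g : G, P (wm n ⁻¹' {g} ∩ um n ⁻¹' (T n g)) := measure_iUnion_le _
      _ = ∑' g : G, P (wm n ⁻¹' {g}) * P (um n ⁻¹' (T n g)) := by
          refine tsum_congr fun g => ?_
          exact (hindep n).measure_inter_preimage_eq_mul _ _ .of_discrete .of_discrete
      _ ≤ ∑' g : G, P (wm n ⁻¹' {g}) * ENNReal.ofReal (f (ε * n)) := by
          refine ENNReal.tsum_le_tsum fun g => ?_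
          refine mul_le_mul_right ?_ _
          rw [← Measure.map_apply (humeas n) .of_discrete, hlawum n]
          exact hTbound n g
      _ = (∑' g : G, P (wm n ⁻¹' {g})) * ENNReal.ofReal (f (ε * n)) :=
          ENNReal.tsum_mul_right
      _ ≤ 1 * ENNReal.ofReal (f (ε * n)) := by
          refine mul_le_mul_left ?_ _
          have : (∑' g : G, P (wm n ⁻¹' {g})) = P (⋃ g : G, wm n ⁻¹' {g}) := by
            refine (measure_iUnion ?_ fun g => (hwmeas n) .of_discrete).symm
            intro g g' hgg'
            exact Set.disjoint_left.2 fun ω h1 h2 => hgg' (h1.symm.trans h2)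
          rw [this]
          exact prob_le_one
      _ = ENNReal.ofReal (f (ε * n)) := one_mul _
  -- main inequality
  have hmain : ∀ n, P (A n) ≤ P (E n) + ENNReal.ofReal (f (ε * n)) := fun n =>
    le_trans (measure_mono (hincl n)) <|
      le_trans (measure_union_le _ _) (add_le_add_right (hbad n) _)
  -- limit of the error term
  have herr : Tendsto (fun n : ℕ => ENNReal.ofReal (f (ε * n))) atTop (nhds 0) := by
    have h1 : Tendsto (fun n : ℕ => ε * n) atTop atTop :=
      Tendsto.const_mul_atTop hε tendsto_natCast_atTop_atTop
    have := (ENNReal.continuous_ofReal.tendsto 0).comp (hf.comp h1)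
    rw [ENNReal.ofReal_zero] at this
    exact this
  have hlow : Tendsto (fun n => P (A n) - ENNReal.ofReal (f (ε * n))) atTop (nhds 1) := by
    have := ENNReal.Tendsto.sub hprog herr (Or.inl ENNReal.one_ne_top)
    simpa using this
  refine tendsto_of_tendsto_of_tendsto_of_le_of_le hlow tendsto_const_nhds
    (fun n => ?_) (fun n => prob_le_one)
  exact tsub_le_iff_right.2 (hmain n)
end
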